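/- There is no finite vertex-transitive graph with motion p for any prime p ≥ 5. More precisely, if Γ is a finite vertex-transitive graph whose automorphism group contains a p-cycle for a prime p ≥ 5, then Γ ≅ Θ[Δ], where Θ is a vertex-transitive graph and Δ is either K_m or mK_1 for some m ≥ 2, or a circulant graph on p vertices. -/

import Mathlib

set_option linter.unusedSectionVars false
set_option maxHeartbeats 1000000

open Equiv Pointwise

/-- A graph is vertex-transitive if its automorphism group is transitive on the
vertices. -/
def IsVertexTransitive {V : Type*} (Γ : SimpleGraph V) : Prop :=
  ∀ u v : V, ∃ e : Γ ≃g Γ, e u = v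

/-- The motion of a graph: the least number of vertices moved by a non-identity
automorphism (i.e. the minimal degree of its automorphism group). -/
noncomputable def motion {V : Type*} [Fintype V] [DecidableEq V] (Γ : SimpleGraph V) : ℕ :=
  sInf {n | ∃ e : Γ ≃g Γ, (e.toEquiv : Equiv.Perm V) ≠ 1 ∧
    (Equiv.Perm.support (e.toEquiv : Equiv.Perm V)).card = n}

/-- The lexicographic product `Θ[Δ]`: the vertex set is `VΔ × VΘ`, and
`(δ₁,θ₁) ∼ (δ₂,θ₂)` iff `θ₁ ∼ θ₂` in `Θ`, or `θ₁ = θ₂` and `δ₁ ∼ δ₂` in `Δ`. -/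
def lexProd {α β : Type*} (Θ : SimpleGraph α) (Δ : SimpleGraph β) :
    SimpleGraph (β × α) :=
  SimpleGraph.fromRel (fun x y => Θ.Adj x.2 y.2 ∨ (x.2 = y.2 ∧ Δ.Adj x.1 y.1))

/-- A circulant graph on `ZMod p`: a Cayley graph of the cyclic group of order `p`,
i.e. a graph invariant under all translations. -/
def IsCirculant {p : ℕ} (Sg : SimpleGraph (ZMod p)) : Prop :=
  ∀ c x y : ZMod p, Sg.Adj x y ↔ Sg.Adj (x + c) (y + c)

namespace St14

open Equiv.Perm Finset

section A

variable {V : Type} [Fintype V] [DecidableEq V] {Γ : SimpleGraph V} {p : ℕ} [NeZero p]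
  {σ : Perm V}

def IsAut (Γ : SimpleGraph V) (σ : Equiv.Perm V) : Prop :=
  ∀ u v, Γ.Adj (σ u) (σ v) ↔ Γ.Adj u v

lemma IsAut.pow {Γ : SimpleGraph V} {σ : Perm V} (h : IsAut Γ σ) (n : ℕ) :
    IsAut Γ (σ ^ n) := by
  induction n with
  | zero => intro u v; simp
  | succ n ih =>
    intro u v
    rw [pow_succ σ n]
    simp only [Perm.mul_apply]
    rw [ih (σ u) (σ v), h u v]

lemma IsAut.mul {Γ : SimpleGraph V} {σ τ : Perm V} (h : IsAut Γ σ) (h' : IsAut Γ τ) :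
    IsAut Γ (σ * τ) := by
  intro u v; simp only [Perm.mul_apply]; rw [h, h']

lemma IsAut.inv {Γ : SimpleGraph V} {σ : Perm V} (h : IsAut Γ σ) : IsAut Γ σ⁻¹ := by
  intro u v
  conv_rhs => rw [← Equiv.apply_symm_apply σ u, ← Equiv.apply_symm_apply σ v, h]
  exact Iff.rfl

noncomputable def phi (σ : Perm V) (c₀ : V) (i : ZMod p) : V := (σ ^ i.val) c₀

section

variable (hp : p.Prime) (ho : orderOf σ = p) {c₀ : V} (hc₀ : σ c₀ ≠ c₀)

include ho in
lemma phi_add_nat (i : ZMod p) (n : ℕ) :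
    phi σ c₀ (i + (n : ZMod p)) = (σ ^ n) (phi σ c₀ i) := by
  unfold phi
  rw [← Perm.mul_apply, ← pow_add]
  congr 1
  rw [pow_eq_pow_iff_modEq, ho]
  refine (ZMod.natCast_eq_natCast_iff _ _ _).mp ?_
  push_cast
  rw [ZMod.natCast_val, ZMod.cast_id, ZMod.natCast_val, ZMod.cast_id]
  ring

include hc₀ in
lemma phi_mem_support (i : ZMod p) : phi σ c₀ i ∈ σ.support :=
  Equiv.Perm.pow_apply_mem_support.mpr (mem_support.mpr hc₀)

include hp ho hc₀ in
lemma phi_inj : Function.Injective (phi (p := p) σ c₀) := by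
  have key : ∀ k : ℕ, 0 < k → k < p → (σ ^ k) c₀ ≠ c₀ := by
    intro k hk0 hkp
    have hcop : Nat.Coprime k (orderOf σ) := by
      rw [ho, Nat.coprime_comm]
      exact (hp.coprime_iff_not_dvd).mpr (Nat.not_dvd_of_pos_of_lt hk0 hkp)
    have : c₀ ∈ (σ ^ k).support := by
      rw [Equiv.Perm.support_pow_coprime hcop]
      exact mem_support.mpr hc₀
    exact mem_support.mp this
  have aux : ∀ i j : ZMod p, phi (p := p) σ c₀ i = phi σ c₀ j → j.val < i.val → False := by
    intro i j hij hlt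
    have h2 : (σ ^ (j.val + (i.val - j.val))) c₀ = (σ ^ j.val) c₀ := by
      rw [Nat.add_sub_cancel' hlt.le]; exact hij
    rw [pow_add, Perm.mul_apply] at h2
    have h3 : (σ ^ (i.val - j.val)) c₀ = c₀ := (σ ^ j.val).injective h2
    exact key _ (Nat.sub_pos_of_lt hlt) (lt_of_le_of_lt (Nat.sub_le _ _) (ZMod.val_lt i)) h3
  intro i j hij
  by_contra hne
  have hv : i.val ≠ j.val := fun h => hne (ZMod.val_injective p h)
  rcases hv.lt_or_gt with h | h
  · exact aux j i hij.symm h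
  · exact aux i j hij h


include hp ho hc₀ in
lemma phi_surj (hc : σ.IsCycle) : ∀ v ∈ σ.support, ∃ i : ZMod p, phi σ c₀ i = v := by
  intro v hv
  obtain ⟨n, hn⟩ := hc.exists_pow_eq hc₀ (mem_support.mp hv)
  refine ⟨(n : ZMod p), ?_⟩
  have := phi_add_nat (σ := σ) (c₀ := c₀) ho 0 n
  rw [zero_add] at this
  rw [this]
  show (σ ^ n) ((σ ^ (0 : ZMod p).val) c₀) = v
  rw [ZMod.val_zero, pow_zero]
  exact hn

include ho in
lemma adj_phi_shift (ha : IsAut Γ σ) (a b c : ZMod p) :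
    Γ.Adj (phi σ c₀ (a + c)) (phi σ c₀ (b + c)) ↔ Γ.Adj (phi σ c₀ a) (phi σ c₀ b) := by
  have hc : c = ((c.val : ℕ) : ZMod p) := by rw [ZMod.natCast_val, ZMod.cast_id]
  rw [hc, phi_add_nat ho, phi_add_nat ho]
  exact ha.pow c.val _ _

include ho in
lemma adj_phi_neg (ha : IsAut Γ σ) (a b : ZMod p) :
    Γ.Adj (phi σ c₀ (-a)) (phi σ c₀ (-b)) ↔ Γ.Adj (phi σ c₀ a) (phi σ c₀ b) := by
  have h := adj_phi_shift (Γ := Γ) (c₀ := c₀) ho ha (-a) (-b) (a + b)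
  have e1 : -a + (a + b) = b := by ring
  have e2 : -b + (a + b) = a := by ring
  rw [e1, e2] at h
  rw [← h, SimpleGraph.adj_comm]

lemma uniform (ha : IsAut Γ σ) (hc : σ.IsCycle) {w : V} (hw : w ∉ σ.support) :
    (∀ v ∈ σ.support, Γ.Adj w v) ∨ (∀ v ∈ σ.support, ¬Γ.Adj w v) := by
  have hfix : σ w = w := notMem_support.mp hw
  have hwfix : ∀ n : ℕ, (σ ^ n) w = w := by
    intro n
    induction n with
    | zero => rfl
    | succ n ih => rw [pow_succ, Perm.mul_apply, hfix, ih]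
  by_cases h : ∃ v ∈ σ.support, Γ.Adj w v
  · left
    obtain ⟨v, hv, hadj⟩ := h
    intro v' hv'
    obtain ⟨n, hn⟩ := hc.exists_pow_eq (mem_support.mp hv) (mem_support.mp hv')
    have := (ha.pow n w v).mpr hadj
    rwa [hwfix n, hn] at this
  · right
    push_neg at h
    exact h
include hp ho hc₀ in
lemma exists_small_aut (hp5 : 5 ≤ p) (hc : σ.IsCycle) (ha : IsAut Γ σ) :
    ∃ τ : Perm V, IsAut Γ τ ∧ τ ≠ 1 ∧ τ.support.card < p := by
  classical
  set φ : ZMod p → V := phi σ c₀ with hφdef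
  have φinj : Function.Injective φ := phi_inj hp ho hc₀
  have φmem : ∀ i, φ i ∈ σ.support := fun i => phi_mem_support hc₀ i
  have φsurj := phi_surj hp ho hc₀ hc
  set ψ : V → ZMod p := Function.invFun φ with hψdef
  have hψφ : ∀ i, ψ (φ i) = i := Function.leftInverse_invFun φinj
  have hφψ : ∀ v ∈ σ.support, φ (ψ v) = v := by
    intro v hv
    obtain ⟨i, hi⟩ := φsurj v hv
    rw [← hi, hψφ]
  have φ0 : φ 0 = c₀ := by
    show (σ ^ (0 : ZMod p).val) c₀ = c₀
    rw [ZMod.val_zero, pow_zero]; rfl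
  set g : V → V := fun v => if v ∈ σ.support then φ (-(ψ v)) else v with hgdef
  have hg_pos : ∀ v, v ∈ σ.support → g v = φ (-(ψ v)) := fun v hv => if_pos hv
  have hg_neg : ∀ v, v ∉ σ.support → g v = v := fun v hv => if_neg hv
  have hginv : Function.Involutive g := by
    intro v
    by_cases hv : v ∈ σ.support
    · have h1 : g v = φ (-(ψ v)) := hg_pos v hv
      have h2 : g v ∈ σ.support := by rw [h1]; exact φmem _
      rw [hg_pos _ h2, h1, hψφ, neg_neg, hφψ v hv]
    · rw [hg_neg v hv, hg_neg v hv]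
  set τ : Perm V := hginv.toPerm g with hτdef
  have hτapp : ∀ v, τ v = g v := fun v => rfl
  have hτmem : ∀ v ∈ σ.support, τ v = φ (-(ψ v)) := by
    intro v hv; rw [hτapp]; exact hg_pos v hv
  have hτnot : ∀ v, v ∉ σ.support → τ v = v := by
    intro v hv; rw [hτapp]; exact hg_neg v hv
  have hτsup : ∀ v ∈ σ.support, τ v ∈ σ.support := by
    intro v hv; rw [hτmem v hv]; exact φmem _
  refine ⟨τ, ?_, ?_, ?_⟩
  · intro u v
    by_cases hu : u ∈ σ.support <;> by_cases hv : v ∈ σ.support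
    · rw [hτmem u hu, hτmem v hv]
      conv_rhs => rw [← hφψ u hu, ← hφψ v hv]
      exact adj_phi_neg ho ha (ψ u) (ψ v)
    · rw [hτmem u hu, hτnot v hv]
      rcases uniform ha hc hv with hall | hnone
      · constructor
        · intro _; exact (hall u hu).symm
        · intro _; exact (hall _ (φmem _)).symm
      · constructor
        · intro h2; exact absurd h2.symm (hnone _ (φmem _))
        · intro h2; exact absurd h2.symm (hnone u hu)
    · rw [hτnot u hu, hτmem v hv]
      rcases uniform ha hc hu with hall | hnone
      · exact ⟨fun _ => hall v hv, fun _ => hall _ (φmem _)⟩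
      · exact ⟨fun h2 => absurd h2 (hnone _ (φmem _)), fun h2 => absurd h2 (hnone v hv)⟩
    · rw [hτnot u hu, hτnot v hv]
  · intro h1
    have h2 : τ (φ 1) = φ (-1) := by rw [hτmem _ (φmem 1), hψφ]
    have h3 : φ (-1) = φ 1 := by rw [← h2, h1]; rfl
    have h4 : (-1 : ZMod p) = 1 := φinj h3
    have h5 : ((2 : ℕ) : ZMod p) = 0 := by push_cast; linear_combination -h4
    rw [ZMod.natCast_eq_zero_iff] at h5
    have := Nat.le_of_dvd (by norm_num) h5
    omega
  · have hsub : τ.support ⊆ σ.support.erase c₀ := by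
      intro v hv
      rw [mem_support] at hv
      by_cases hvs : v ∈ σ.support
      · refine Finset.mem_erase.mpr ⟨?_, hvs⟩
        rintro rfl
        apply hv
        have hψ0 : ψ v = 0 := by rw [← φ0]; exact hψφ 0
        rw [hτmem _ hvs, hψ0, neg_zero, φ0]
      · exact absurd (hτnot v hvs) hv
    have h6 := Finset.card_le_card hsub
    have h7 : (σ.support.erase c₀).card = σ.support.card - 1 :=
      Finset.card_erase_of_mem (mem_support.mpr hc₀)
    have h8 : σ.support.card = p := by rw [← ho, hc.orderOf]
    omega

end

def isoOfIsAut {Γ : SimpleGraph V} {σ : Perm V} (h : IsAut Γ σ) : Γ ≃g Γ :=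
  ⟨σ, @fun a b => h a b⟩

lemma motionSet_mem {Γ : SimpleGraph V} {σ : Perm V} (h : IsAut Γ σ) (h1 : σ ≠ 1) :
    σ.support.card ∈ {n | ∃ e : Γ ≃g Γ, (e.toEquiv : Equiv.Perm V) ≠ 1 ∧
      (Equiv.Perm.support (e.toEquiv : Equiv.Perm V)).card = n} :=
  ⟨isoOfIsAut h, h1, rfl⟩

/-- From a minimal-support nontrivial automorphism of support size prime `p`, extract a
`p`-cycle automorphism. -/
lemma motion_sInf_ne (Γ : SimpleGraph V) {p : ℕ} [NeZero p] (hp : p.Prime) (hp5 : 5 ≤ p)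
    (hmo : sInf {n | ∃ e : Γ ≃g Γ, (e.toEquiv : Equiv.Perm V) ≠ 1 ∧
      (Equiv.Perm.support (e.toEquiv : Equiv.Perm V)).card = n} = p) : False := by
  classical
  set S := {n | ∃ e : Γ ≃g Γ, (e.toEquiv : Equiv.Perm V) ≠ 1 ∧
      (Equiv.Perm.support (e.toEquiv : Equiv.Perm V)).card = n} with hSdef
  have hne : S.Nonempty := by
    by_contra h
    rw [Set.not_nonempty_iff_eq_empty] at h
    rw [h, Nat.sInf_empty] at hmo
    omega
  have hmem : p ∈ S := hmo ▸ Nat.sInf_mem hne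
  have hmin : ∀ n ∈ S, p ≤ n := fun n hn => hmo ▸ Nat.sInf_le hn
  obtain ⟨e, he1, he2⟩ := hmem
  set σ₁ : Perm V := e.toEquiv with hσ₁def
  have ha : IsAut Γ σ₁ := fun u v => e.map_adj_iff
  have hord : orderOf σ₁ ≠ 1 := by rwa [ne_eq, orderOf_eq_one_iff]
  have hop : 0 < orderOf σ₁ := orderOf_pos σ₁
  set q := (orderOf σ₁).minFac with hqdef
  have hq : q.Prime := Nat.minFac_prime hord
  have hqd : q ∣ orderOf σ₁ := Nat.minFac_dvd _
  set f := σ₁ ^ (orderOf σ₁ / q) with hfdef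
  have hof : orderOf f = q := by
    rw [hfdef, orderOf_pow, Nat.gcd_eq_right (Nat.div_dvd_of_dvd hqd),
      Nat.div_div_self hqd (by omega)]
  have hf1 : f ≠ 1 := by
    intro h
    rw [h, orderOf_one] at hof
    exact hq.ne_one hof.symm
  have haf : IsAut Γ f := ha.pow _
  have hfS : f.support.card ∈ S := motionSet_mem haf hf1
  have hle : p ≤ f.support.card := hmin _ hfS
  have hsub : f.support ⊆ σ₁.support := Equiv.Perm.support_pow_le σ₁ _
  have hcardle := Finset.card_le_card hsub
  have hcard : f.support.card = p := by omega
  have hqtype : ∀ x ∈ f.cycleType, x = q := by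
    intro x hx
    have hdvd : x ∣ q := by
      rw [← hof, ← Equiv.Perm.lcm_cycleType]
      exact Multiset.dvd_lcm hx
    have h2 := Equiv.Perm.two_le_of_mem_cycleType hx
    rcases (Nat.Prime.eq_one_or_self_of_dvd hq x hdvd) with h | h
    · omega
    · exact h
  have hrep : f.cycleType = Multiset.replicate (Multiset.card f.cycleType) q :=
    Multiset.eq_replicate_of_mem hqtype
  have hsum : f.cycleType.sum = p := by rw [Equiv.Perm.sum_cycleType, hcard]
  have hmul : (Multiset.card f.cycleType) * q = p := by
    rw [← hsum]
    conv_rhs => rw [hrep]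
    rw [Multiset.sum_replicate, smul_eq_mul]
  have hqp : q = p := by
    have : q ∣ p := ⟨Multiset.card f.cycleType, by rw [← hmul, mul_comm]⟩
    rcases (Nat.Prime.eq_one_or_self_of_dvd hp q this) with h | h
    · exact absurd h hq.ne_one
    · exact h
  have hcardone : Multiset.card f.cycleType = 1 := by
    have := hq.two_le
    nlinarith [hmul, hqp]
  have hcyc : f.IsCycle := Equiv.Perm.card_cycleType_eq_one.mp hcardone
  have hofp : orderOf f = p := by rw [hof, hqp]
  obtain ⟨c₀, hc₀, -⟩ := id hcyc
  obtain ⟨τ, hτa, hτ1, hτlt⟩ := exists_small_aut hp hofp hc₀ hp5 hcyc haf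
  have := hmin _ (motionSet_mem hτa hτ1)
  omega


lemma cd_cover {p : ℕ} [NeZero p] (hp : p.Prime) (T W : Finset (ZMod p))
    (hT : T.Nonempty) (hW : W.Nonempty) (hdisj : ∀ t ∈ T, t ∉ W)
    (hcard : T.card + W.card = p) :
    ∀ d : ZMod p, d ≠ 0 → ∃ t ∈ T, ∃ w ∈ W, t - w = d := by
  classical
  set B : Finset (ZMod p) := W.image (fun x => -x) with hB
  have hBcard : B.card = W.card := Finset.card_image_of_injective _ neg_injective
  have hBne : B.Nonempty := hW.image _
  have hsub : T + B ⊆ Finset.univ.erase 0 := by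
    intro x hx
    rw [Finset.mem_add] at hx
    obtain ⟨t, ht, b, hb, htb⟩ := hx
    rw [hB, Finset.mem_image] at hb
    obtain ⟨w, hw, rfl⟩ := hb
    refine Finset.mem_erase.mpr ⟨?_, Finset.mem_univ _⟩
    rintro rfl
    have : t = w := by linear_combination htb
    exact hdisj t ht (this ▸ hw)
  have hcardU : (Finset.univ.erase (0 : ZMod p)).card = p - 1 := by
    rw [Finset.card_erase_of_mem (Finset.mem_univ _), Finset.card_univ, ZMod.card]
  have hge : p - 1 ≤ (T + B).card := by
    have h1 := ZMod.cauchy_davenport hp hT hBne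
    rw [hBcard] at h1
    have h2 : min p (T.card + W.card - 1) = p - 1 := by
      rw [hcard]
      exact Nat.min_eq_right (by omega)
    rwa [h2] at h1
  have heq : T + B = Finset.univ.erase 0 :=
    Finset.eq_of_subset_of_card_le hsub (by omega)
  intro d hd
  have hdm : d ∈ T + B := by
    rw [heq]
    exact Finset.mem_erase.mpr ⟨hd, Finset.mem_univ _⟩
  rw [Finset.mem_add] at hdm
  obtain ⟨t, ht, b, hb, htb⟩ := hdm
  rw [hB, Finset.mem_image] at hb
  obtain ⟨w, hw, rfl⟩ := hb
  exact ⟨t, ht, w, hw, by linear_combination htb⟩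

/-- Two `p`-cycle-automorphism supports in a twin-free graph are equal or disjoint. -/
lemma supports_eq_or_disjoint {Γ : SimpleGraph V} {p : ℕ} [NeZero p]
    (hp : p.Prime) (hp5 : 5 ≤ p)
    {σ τ : Perm V} (haσ : IsAut Γ σ) (hcσ : σ.IsCycle) (hsσ : σ.support.card = p)
    (haτ : IsAut Γ τ) (hcτ : τ.IsCycle) (hsτ : τ.support.card = p)
    (hopen : ∀ u v : V, Γ.neighborSet u = Γ.neighborSet v → u = v)
    (hclosed : ∀ u v : V, insert u (Γ.neighborSet u) = insert v (Γ.neighborSet v) → u = v) :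
    σ.support = τ.support ∨ Disjoint σ.support τ.support := by
  classical
  by_contra hcon
  push_neg at hcon
  obtain ⟨hne, hnd⟩ := hcon
  obtain ⟨v0, hv0⟩ := Finset.not_disjoint_iff.mp hnd
  set C := σ.support with hC
  set D := τ.support with hD
  -- C \ D and D \ C are nonempty
  have hCD : ∃ u, u ∈ C ∧ u ∉ D := by
    by_contra h
    push_neg at h
    have hsub : C ⊆ D := h
    exact hne (Finset.eq_of_subset_of_card_le hsub (by rw [hsσ, hsτ]))
  have hDC : ∃ w, w ∈ D ∧ w ∉ C := by
    by_contra h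
    push_neg at h
    have hsub : D ⊆ C := h
    exact hne (Finset.eq_of_subset_of_card_le hsub (by rw [hsσ, hsτ])).symm
  obtain ⟨u0, hu0D, hu0C⟩ := hCD
  obtain ⟨w0, hw0D, hw0C⟩ := hDC
  -- dichotomy: D \ C is uniformly adjacent to all of C, or to none of C
  have hdich : (∀ w ∈ D, w ∉ C → ∀ v ∈ C, Γ.Adj w v) ∨
      (∀ w ∈ D, w ∉ C → ∀ v ∈ C, ¬Γ.Adj w v) := by
    by_cases hex : ∃ w, w ∈ D ∧ w ∉ C ∧ ∃ v ∈ C, Γ.Adj w v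
    · left
      obtain ⟨w1, hw1D, hw1C, v1, hv1, hadj1⟩ := hex
      have hw1all : ∀ v ∈ C, Γ.Adj w1 v := by
        rcases uniform haσ hcσ hw1C with h | h
        · exact h
        · exact absurd hadj1 (h v1 hv1)
      intro w hwD hwC v hv
      rcases uniform haσ hcσ hwC with h | h
      · exact h v hv
      · exfalso
        rcases uniform haτ hcτ hu0C with h2 | h2
        · exact (h u0 hu0D) (h2 w hwD).symm
        · exact (h2 w1 hw1D) (hw1all u0 hu0D).symm
    · right
      push_neg at hex
      intro w hwD hwC v hv
      exact hex w hwD hwC v hv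
  -- coordinates on D
  obtain ⟨d₀, hd₀, -⟩ := id hcτ
  have hoτ : orderOf τ = p := by rw [hcτ.orderOf, hsτ]
  set ψ : ZMod p → V := phi τ d₀ with hψ
  have ψinj : Function.Injective ψ := phi_inj hp hoτ hd₀
  have ψmem : ∀ i, ψ i ∈ D := fun i => phi_mem_support hd₀ i
  have ψsurj : ∀ v ∈ D, ∃ i, ψ i = v := phi_surj hp hoτ hd₀ hcτ
  set T : Finset (ZMod p) := Finset.univ.filter (fun i => ψ i ∈ C) with hTdef
  set W : Finset (ZMod p) := Finset.univ.filter (fun i => ¬ ψ i ∈ C) with hWdef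
  have hTne : T.Nonempty := by
    obtain ⟨i, hi⟩ := ψsurj v0 hv0.2
    exact ⟨i, Finset.mem_filter.mpr ⟨Finset.mem_univ _, by rw [hi]; exact hv0.1⟩⟩
  have hWne : W.Nonempty := by
    obtain ⟨i, hi⟩ := ψsurj w0 hw0D
    exact ⟨i, Finset.mem_filter.mpr ⟨Finset.mem_univ _, by rw [hi]; exact hw0C⟩⟩
  have hdisjTW : ∀ t ∈ T, t ∉ W := by
    intro t ht hw
    exact (Finset.mem_filter.mp hw).2 (Finset.mem_filter.mp ht).2
  have hcardTW : T.card + W.card = p := by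
    rw [hTdef, hWdef, Finset.card_filter_add_card_filter_not, Finset.card_univ, ZMod.card]
  have hcover := cd_cover hp T W hTne hWne hdisjTW hcardTW
  have h01 : (0 : ZMod p) ≠ 1 := by
    haveI : Fact (1 < p) := ⟨by omega⟩
    exact zero_ne_one
  rcases hdich with hall | hnone
  · -- D is complete, giving closed twins
    have hcomp : ∀ x y : ZMod p, x ≠ y → Γ.Adj (ψ x) (ψ y) := by
      intro x y hxy
      have hd : y - x ≠ 0 := sub_ne_zero.mpr (Ne.symm hxy)
      obtain ⟨t, ht, w, hw, htw⟩ := hcover (y - x) hd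
      have h1 : Γ.Adj (ψ w) (ψ t) :=
        hall (ψ w) (ψmem w) (Finset.mem_filter.mp hw).2 (ψ t) (Finset.mem_filter.mp ht).2
      have h2 := (adj_phi_shift hoτ haτ w t (x - w)).mpr h1
      have e1 : w + (x - w) = x := by ring
      have e2 : t + (x - w) = y := by linear_combination htw
      rwa [e1, e2] at h2
    have hmem2 : ∀ j i : ZMod p, ψ i ∈ insert (ψ j) (Γ.neighborSet (ψ j)) := by
      intro j i
      by_cases h : i = j
      · rw [h]; exact Set.mem_insert _ _
      · exact Set.mem_insert_of_mem _ (hcomp j i (Ne.symm h))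
    have heqN : insert (ψ 0) (Γ.neighborSet (ψ 0)) = insert (ψ 1) (Γ.neighborSet (ψ 1)) := by
      ext z
      by_cases hz : z ∈ D
      · obtain ⟨i, rfl⟩ := ψsurj z hz
        exact ⟨fun _ => hmem2 1 i, fun _ => hmem2 0 i⟩
      · have hz0 : z ≠ ψ 0 := fun h => hz (h ▸ ψmem 0)
        have hz1 : z ≠ ψ 1 := fun h => hz (h ▸ ψmem 1)
        rcases uniform haτ hcτ hz with hallz | hnonez
        · constructor
          · intro _; exact Set.mem_insert_of_mem _ (hallz (ψ 1) (ψmem 1)).symm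
          · intro _; exact Set.mem_insert_of_mem _ (hallz (ψ 0) (ψmem 0)).symm
        · constructor
          · intro h
            rcases Set.mem_insert_iff.mp h with h | h
            · exact absurd h hz0
            · exact absurd (h : Γ.Adj (ψ 0) z).symm (hnonez (ψ 0) (ψmem 0))
          · intro h
            rcases Set.mem_insert_iff.mp h with h | h
            · exact absurd h hz1
            · exact absurd (h : Γ.Adj (ψ 1) z).symm (hnonez (ψ 1) (ψmem 1))
    exact h01 (ψinj (hclosed _ _ heqN))
  · -- D is empty, giving open twins
    have hemp : ∀ x y : ZMod p, ¬Γ.Adj (ψ x) (ψ y) := by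
      intro x y hadj
      have hxy : x ≠ y := by rintro rfl; exact Γ.irrefl hadj
      have hd : y - x ≠ 0 := sub_ne_zero.mpr (Ne.symm hxy)
      obtain ⟨t, ht, w, hw, htw⟩ := hcover (y - x) hd
      have h2 := (adj_phi_shift hoτ haτ x y (w - x)).mpr hadj
      have e1 : x + (w - x) = w := by ring
      have e2 : y + (w - x) = t := by linear_combination htw.symm
      rw [e1, e2] at h2
      exact hnone (ψ w) (ψmem w) (Finset.mem_filter.mp hw).2 (ψ t) (Finset.mem_filter.mp ht).2 h2
    have heqN : Γ.neighborSet (ψ 0) = Γ.neighborSet (ψ 1) := by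
      ext z
      by_cases hz : z ∈ D
      · obtain ⟨i, rfl⟩ := ψsurj z hz
        exact ⟨fun h => absurd h (hemp 0 i), fun h => absurd h (hemp 1 i)⟩
      · rcases uniform haτ hcτ hz with hallz | hnonez
        · exact ⟨fun _ => (hallz (ψ 1) (ψmem 1)).symm, fun _ => (hallz (ψ 0) (ψmem 0)).symm⟩
        · constructor
          · intro h; exact absurd (h : Γ.Adj (ψ 0) z).symm (hnonez (ψ 0) (ψmem 0))
          · intro h; exact absurd (h : Γ.Adj (ψ 1) z).symm (hnonez (ψ 1) (ψmem 1))
    exact h01 (ψinj (hopen _ _ heqN))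

end A

lemma lexProd_adj {α β : Type*} (Θ : SimpleGraph α) (Δ : SimpleGraph β) (x y : β × α) :
    (lexProd Θ Δ).Adj x y ↔ (Θ.Adj x.2 y.2 ∨ (x.2 = y.2 ∧ Δ.Adj x.1 y.1)) := by
  constructor
  · rintro ⟨hne, h | h⟩
    · exact h
    · rcases h with h | ⟨h1, h2⟩
      · exact Or.inl h.symm
      · exact Or.inr ⟨h1.symm, h2.symm⟩
  · intro h
    refine ⟨?_, Or.inl h⟩
    rcases h with h | ⟨h1, h2⟩
    · intro he; rw [he] at h; exact Θ.irrefl h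
    · intro he
      rw [Prod.ext_iff] at he
      rw [he.1] at h2
      exact Δ.irrefl h2

lemma decomp {V : Type} [Fintype V] [DecidableEq V] (Γ : SimpleGraph V)
    (hvt : IsVertexTransitive Γ)
    {ι β : Type} [Fintype ι] [DecidableEq ι] (b₀ : β) (Δ : SimpleGraph β)
    (c : V → ι) (f : ι → β → V)
    (hcf : ∀ i b, c (f i b) = i)
    (hfc : ∀ v, ∃ b, f (c v) b = v)
    (hfinj : ∀ i, Function.Injective (f i))
    (hΔ : ∀ i b b', Γ.Adj (f i b) (f i b') ↔ Δ.Adj b b')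
    (huni : ∀ u v u' v', c u = c u' → c v = c v' → c u ≠ c v → Γ.Adj u v → Γ.Adj u' v')
    (hpart : ∀ g : Γ ≃g Γ, ∀ u v, c u = c v → c (g u) = c (g v)) :
    ∃ (k : ℕ) (Θ : SimpleGraph (Fin k)), IsVertexTransitive Θ ∧
      Nonempty (Γ ≃g lexProd Θ Δ) := by
  classical
  set k := Fintype.card ι with hk
  set E : ι ≃ Fin k := Fintype.equivFin ι with hE
  set r : Fin k → ι := fun x => E.symm x with hr
  have hrinj : Function.Injective r := E.symm.injective
  set Θ : SimpleGraph (Fin k) :=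
    { Adj := fun i j => i ≠ j ∧ Γ.Adj (f (r i) b₀) (f (r j) b₀)
      symm := by
        constructor
        rintro i j ⟨h1, h2⟩
        exact ⟨h1.symm, h2.symm⟩
      loopless := by
        constructor
        rintro i ⟨h1, _⟩
        exact h1 rfl } with hΘ
  have hΘadj : ∀ i j, Θ.Adj i j ↔ (i ≠ j ∧ Γ.Adj (f (r i) b₀) (f (r j) b₀)) := by
    intro i j; rw [hΘ]
  have hpart2 : ∀ (g : Γ ≃g Γ) (u v : V), c (g u) = c (g v) → c u = c v := by
    intro g u v h
    have := hpart g.symm _ _ h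
    rwa [RelIso.symm_apply_apply, RelIso.symm_apply_apply] at this
  have key : ∀ (i j : ι) (b b' : β), i ≠ j →
      (Γ.Adj (f i b) (f j b') ↔ Γ.Adj (f i b₀) (f j b₀)) := by
    intro i j b b' hij
    constructor
    · intro h
      exact huni _ _ _ _ (by rw [hcf, hcf]) (by rw [hcf, hcf]) (by rw [hcf, hcf]; exact hij) h
    · intro h
      exact huni _ _ _ _ (by rw [hcf, hcf]) (by rw [hcf, hcf]) (by rw [hcf, hcf]; exact hij) h
  -- the vertex bijection
  have hbij : Function.Bijective (fun x : β × Fin k => f (r x.2) x.1) := by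
    constructor
    · rintro ⟨b1, i1⟩ ⟨b2, i2⟩ h
      simp only at h
      have h2 : r i1 = r i2 := by
        rw [← hcf (r i1) b1, ← hcf (r i2) b2, h]
      have h3 : i1 = i2 := hrinj h2
      rw [h3] at h ⊢
      rw [hfinj _ h]
    · intro v
      obtain ⟨b, hb⟩ := hfc v
      refine ⟨(b, E (c v)), ?_⟩
      simp only [hr, Equiv.symm_apply_apply]
      exact hb
  set Ψ : β × Fin k ≃ V := Equiv.ofBijective _ hbij with hΨ
  have hΨapp : ∀ x : β × Fin k, Ψ x = f (r x.2) x.1 := fun _ => rfl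
  have hiso : ∀ x y : β × Fin k, Γ.Adj (Ψ x) (Ψ y) ↔ (lexProd Θ Δ).Adj x y := by
    intro x y
    rw [lexProd_adj, hΨapp, hΨapp]
    by_cases hxy : x.2 = y.2
    · have hΘf : ¬ Θ.Adj x.2 y.2 := by
        rw [hxy]; exact Θ.irrefl
      rw [hxy]
      rw [hΔ]
      constructor
      · intro h; exact Or.inr ⟨rfl, h⟩
      · rintro (h | ⟨-, h⟩)
        · exact absurd (hxy ▸ h) hΘf
        · exact h
    · have hrne : r x.2 ≠ r y.2 := fun h => hxy (hrinj h)
      rw [key _ _ _ _ hrne]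
      constructor
      · intro h
        exact Or.inl ((hΘadj _ _).mpr ⟨hxy, h⟩)
      · rintro (h | ⟨h, -⟩)
        · exact ((hΘadj _ _).mp h).2
        · exact absurd h hxy
  have hVT : IsVertexTransitive Θ := by
    intro i j
    obtain ⟨g, hg⟩ := hvt (f (r i) b₀) (f (r j) b₀)
    set σfun : Fin k → Fin k := fun x => E (c (g (f (r x) b₀))) with hσfun
    have hcσ : ∀ x, c (f (r (σfun x)) b₀) = c (g (f (r x) b₀)) := by
      intro x
      rw [hcf]
      exact E.symm_apply_apply _
    have hσinj : Function.Injective σfun := by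
      intro x y h
      have h2 := hpart2 g _ _ (E.injective h)
      rw [hcf, hcf] at h2
      exact hrinj h2
    set σ : Fin k ≃ Fin k := Equiv.ofBijective σfun
      ((Finite.injective_iff_bijective).mp hσinj) with hσ
    have hσapp : ∀ x, σ x = σfun x := fun _ => rfl
    have hmapiff : ∀ x y, Θ.Adj (σ x) (σ y) ↔ Θ.Adj x y := by
      intro x y
      rw [hΘadj, hΘadj, hσapp, hσapp]
      constructor
      · rintro ⟨hne, hadj⟩
        refine ⟨fun h => hne (by rw [h]), ?_⟩
        have hcne : c (f (r (σfun x)) b₀) ≠ c (f (r (σfun y)) b₀) := by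
          rw [hcf, hcf]; exact fun h => hne (hrinj h)
        have hgadj := huni _ _ _ _ (hcσ x) (hcσ y) hcne hadj
        have := g.symm.map_adj_iff.mpr hgadj
        rwa [RelIso.symm_apply_apply, RelIso.symm_apply_apply] at this
      · rintro ⟨hne, hadj⟩
        refine ⟨fun h => hne (hσinj h), ?_⟩
        have hgadj : Γ.Adj (g (f (r x) b₀)) (g (f (r y) b₀)) := g.map_adj_iff.mpr hadj
        have hcne2 : c (g (f (r x) b₀)) ≠ c (g (f (r y) b₀)) := by
          intro h
          have h2 := hpart2 g _ _ h
          rw [hcf, hcf] at h2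
          exact hne (hrinj h2)
        exact huni _ _ _ _ (hcσ x).symm (hcσ y).symm hcne2 hgadj
    refine ⟨⟨σ, @fun a b => hmapiff a b⟩, ?_⟩
    show σ i = j
    rw [hσapp, hσfun]
    simp only
    rw [hg, hcf, hr, Equiv.apply_symm_apply]
  exact ⟨k, Θ, hVT, ⟨(RelIso.mk Ψ (@fun a b => hiso a b)).symm⟩⟩

section D

variable {V : Type} [Fintype V] [DecidableEq V] (Γ : SimpleGraph V)

lemma neighborSet_iso (g : Γ ≃g Γ) (u : V) :
    Γ.neighborSet (g u) = g '' (Γ.neighborSet u) := by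
  ext w
  rw [SimpleGraph.mem_neighborSet, Set.mem_image]
  constructor
  · intro h
    refine ⟨g.symm w, ?_, by simp⟩
    rw [SimpleGraph.mem_neighborSet]
    have : Γ.Adj (g u) (g (g.symm w)) := by simpa using h
    exact g.map_adj_iff.mp this
  · rintro ⟨x, hx, rfl⟩
    rw [SimpleGraph.mem_neighborSet] at hx
    exact g.map_adj_iff.mpr hx

lemma closedNeighborSet_iso (g : Γ ≃g Γ) (u : V) :
    insert (g u) (Γ.neighborSet (g u)) = g '' (insert u (Γ.neighborSet u)) := by
  rw [Set.image_insert_eq, neighborSet_iso]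

lemma class_card (hvt : IsVertexTransitive Γ) (r : V → V → Prop)
    (hrel : ∀ (g : Γ ≃g Γ) u v, r u v → r (g u) (g v)) (u₁ : V) :
    ∀ w : V, Nat.card {v // r v w} = Nat.card {v // r v u₁} := by
  classical
  intro w
  obtain ⟨g, hg⟩ := hvt u₁ w
  refine (Nat.card_congr (Equiv.subtypeEquiv g.toEquiv ?_)).symm
  intro v
  constructor
  · intro h
    have := hrel g _ _ h
    rwa [hg] at this
  · intro h
    rw [← hg] at h
    have := hrel g.symm _ _ h
    simpa using this

lemma open_twin_decomp (hvt : IsVertexTransitive Γ) (u₁ u₂ : V) (hne : u₁ ≠ u₂)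
    (htwin : Γ.neighborSet u₁ = Γ.neighborSet u₂) :
    ∃ m : ℕ, 2 ≤ m ∧ ∃ (k : ℕ) (Θ : SimpleGraph (Fin k)), IsVertexTransitive Θ ∧
      Nonempty (Γ ≃g lexProd Θ (⊥ : SimpleGraph (Fin m))) := by
  classical
  set r : V → V → Prop := fun u v => Γ.neighborSet u = Γ.neighborSet v with hrdef
  have hrel : ∀ (g : Γ ≃g Γ) u v, r u v → r (g u) (g v) := by
    intro g u v h
    show Γ.neighborSet (g u) = Γ.neighborSet (g v)
    rw [neighborSet_iso, neighborSet_iso, h]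
  set s : Setoid V := ⟨r, ⟨fun _ => rfl, fun h => h.symm, fun h1 h2 => h1.trans h2⟩⟩ with hs
  set m := Nat.card {v // r v u₁} with hm
  have hcard : ∀ w, Nat.card {v // r v w} = m := class_card Γ hvt r hrel u₁
  have hm2 : 2 ≤ m := by
    have hnt : Nontrivial {v // r v u₁} :=
      ⟨⟨⟨u₁, rfl⟩, ⟨u₂, htwin.symm⟩, fun h => hne (by injection h)⟩⟩
    rw [hm, Nat.card_eq_fintype_card]
    exact Fintype.one_lt_card
  have hcard' : ∀ i : Quotient s, Fintype.card {v // Quotient.mk s v = i} = m := by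
    intro i
    rw [← Nat.card_eq_fintype_card, ← hcard i.out]
    refine Nat.card_congr (Equiv.subtypeEquivRight ?_)
    intro v
    exact Quotient.mk_eq_iff_out
  set E : ∀ i : Quotient s, {v // Quotient.mk s v = i} ≃ Fin m :=
    fun i => Fintype.equivFinOfCardEq (hcard' i) with hE
  set c : V → Quotient s := Quotient.mk s with hc
  set f : Quotient s → Fin m → V := fun i b => ((E i).symm b : V) with hf
  have hceq : ∀ u v, c u = c v ↔ r u v := fun u v => Quotient.eq
  have hcf : ∀ i b, c (f i b) = i := fun i b => ((E i).symm b).2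
  have hfc : ∀ v, ∃ b, f (c v) b = v := by
    intro v
    refine ⟨E (c v) ⟨v, rfl⟩, ?_⟩
    show (((E (c v)).symm (E (c v) ⟨v, rfl⟩)) : V) = v
    rw [Equiv.symm_apply_apply]
  have hfinj : ∀ i, Function.Injective (f i) := by
    intro i a b h
    exact (E i).symm.injective (Subtype.val_injective h)
  have hnoadj : ∀ u v, r u v → ¬Γ.Adj u v := by
    intro u v h hadj
    have h2 : u ∈ Γ.neighborSet v := hadj.symm
    rw [← h] at h2
    exact Γ.irrefl h2
  have hΔ : ∀ i b b', Γ.Adj (f i b) (f i b') ↔ (⊥ : SimpleGraph (Fin m)).Adj b b' := by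
    intro i b b'
    simp only [SimpleGraph.bot_adj, iff_false]
    exact hnoadj _ _ ((hceq _ _).mp ((hcf i b).trans (hcf i b').symm))
  have huni : ∀ u v u' v', c u = c u' → c v = c v' → c u ≠ c v → Γ.Adj u v → Γ.Adj u' v' := by
    intro u v u' v' h1 h2 _ hadj
    have r1 : r u u' := (hceq _ _).mp h1
    have r2 : r v v' := (hceq _ _).mp h2
    have s1 : v ∈ Γ.neighborSet u' := by rw [← r1]; exact hadj
    have s2 : u' ∈ Γ.neighborSet v' := by rw [← r2]; exact (s1 : Γ.Adj u' v).symm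
    exact (s2 : Γ.Adj v' u').symm
  have hpart : ∀ g : Γ ≃g Γ, ∀ u v, c u = c v → c (g u) = c (g v) := by
    intro g u v h
    exact (hceq _ _).mpr (hrel g _ _ ((hceq _ _).mp h))
  exact ⟨m, hm2, decomp Γ hvt (⟨0, by omega⟩ : Fin m) ⊥ c f hcf hfc hfinj hΔ huni hpart⟩

lemma closed_twin_decomp (hvt : IsVertexTransitive Γ) (u₁ u₂ : V) (hne : u₁ ≠ u₂)
    (htwin : insert u₁ (Γ.neighborSet u₁) = insert u₂ (Γ.neighborSet u₂)) :
    ∃ m : ℕ, 2 ≤ m ∧ ∃ (k : ℕ) (Θ : SimpleGraph (Fin k)), IsVertexTransitive Θ ∧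
      Nonempty (Γ ≃g lexProd Θ (⊤ : SimpleGraph (Fin m))) := by
  classical
  set r : V → V → Prop := fun u v => insert u (Γ.neighborSet u) = insert v (Γ.neighborSet v)
    with hrdef
  have hrel : ∀ (g : Γ ≃g Γ) u v, r u v → r (g u) (g v) := by
    intro g u v h
    show insert (g u) (Γ.neighborSet (g u)) = insert (g v) (Γ.neighborSet (g v))
    rw [closedNeighborSet_iso, closedNeighborSet_iso, h]
  set s : Setoid V := ⟨r, ⟨fun _ => rfl, fun h => h.symm, fun h1 h2 => h1.trans h2⟩⟩ with hs
  set m := Nat.card {v // r v u₁} with hm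
  have hcard : ∀ w, Nat.card {v // r v w} = m := class_card Γ hvt r hrel u₁
  have hm2 : 2 ≤ m := by
    have hnt : Nontrivial {v // r v u₁} :=
      ⟨⟨⟨u₁, rfl⟩, ⟨u₂, htwin.symm⟩, fun h => hne (by injection h)⟩⟩
    rw [hm, Nat.card_eq_fintype_card]
    exact Fintype.one_lt_card
  have hcard' : ∀ i : Quotient s, Fintype.card {v // Quotient.mk s v = i} = m := by
    intro i
    rw [← Nat.card_eq_fintype_card, ← hcard i.out]
    refine Nat.card_congr (Equiv.subtypeEquivRight ?_)
    intro v
    exact Quotient.mk_eq_iff_out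
  set E : ∀ i : Quotient s, {v // Quotient.mk s v = i} ≃ Fin m :=
    fun i => Fintype.equivFinOfCardEq (hcard' i) with hE
  set c : V → Quotient s := Quotient.mk s with hc
  set f : Quotient s → Fin m → V := fun i b => ((E i).symm b : V) with hf
  have hceq : ∀ u v, c u = c v ↔ r u v := fun u v => Quotient.eq
  have hcf : ∀ i b, c (f i b) = i := fun i b => ((E i).symm b).2
  have hfc : ∀ v, ∃ b, f (c v) b = v := by
    intro v
    refine ⟨E (c v) ⟨v, rfl⟩, ?_⟩
    show (((E (c v)).symm (E (c v) ⟨v, rfl⟩)) : V) = v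
    rw [Equiv.symm_apply_apply]
  have hfinj : ∀ i, Function.Injective (f i) := by
    intro i a b h
    exact (E i).symm.injective (Subtype.val_injective h)
  have hadjcl : ∀ u v, r u v → u ≠ v → Γ.Adj u v := by
    intro u v h hne2
    have h2 : v ∈ insert u (Γ.neighborSet u) := by
      rw [h]; exact Set.mem_insert v _
    rcases Set.mem_insert_iff.mp h2 with h3 | h3
    · exact absurd h3.symm hne2
    · exact (h3 : Γ.Adj u v)
  have hΔ : ∀ i b b', Γ.Adj (f i b) (f i b') ↔ (⊤ : SimpleGraph (Fin m)).Adj b b' := by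
    intro i b b'
    rw [SimpleGraph.top_adj]
    constructor
    · intro hadj hbb
      rw [hbb] at hadj
      exact Γ.irrefl hadj
    · intro hbb
      refine hadjcl _ _ ((hceq _ _).mp ((hcf i b).trans (hcf i b').symm)) ?_
      exact fun h => hbb (hfinj i h)
  have huni : ∀ u v u' v', c u = c u' → c v = c v' → c u ≠ c v → Γ.Adj u v → Γ.Adj u' v' := by
    intro u v u' v' h1 h2 hcne hadj
    have r1 : r u u' := (hceq _ _).mp h1
    have r2 : r v v' := (hceq _ _).mp h2
    have s1 : v ∈ insert u' (Γ.neighborSet u') := by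
      rw [← r1]; exact Set.mem_insert_of_mem _ hadj
    have hadj2 : Γ.Adj u' v := by
      rcases Set.mem_insert_iff.mp s1 with h3 | h3
      · exfalso; exact hcne (by rw [h1, ← h3])
      · exact h3
    have s2 : u' ∈ insert v' (Γ.neighborSet v') := by
      rw [← r2]; exact Set.mem_insert_of_mem _ hadj2.symm
    rcases Set.mem_insert_iff.mp s2 with h3 | h3
    · exfalso; exact hcne (by rw [h1, h3, ← h2])
    · exact (h3 : Γ.Adj v' u').symm
  have hpart : ∀ g : Γ ≃g Γ, ∀ u v, c u = c v → c (g u) = c (g v) := by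
    intro g u v h
    exact (hceq _ _).mpr (hrel g _ _ ((hceq _ _).mp h))
  exact ⟨m, hm2, decomp Γ hvt (⟨0, by omega⟩ : Fin m) ⊤ c f hcf hfc hfinj hΔ huni hpart⟩

end D

lemma twinfree_decomp {V : Type} [Fintype V] [DecidableEq V] {Γ : SimpleGraph V}
    (hvt : IsVertexTransitive Γ) {p : ℕ} [NeZero p] (hp : p.Prime) (hp5 : 5 ≤ p)
    {σ₀ : Equiv.Perm V} (ha₀ : IsAut Γ σ₀) (hc₀ : σ₀.IsCycle)
    (hs₀ : σ₀.support.card = p)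
    (hopen : ∀ u v : V, Γ.neighborSet u = Γ.neighborSet v → u = v)
    (hclosed : ∀ u v : V, insert u (Γ.neighborSet u) = insert v (Γ.neighborSet v) → u = v) :
    ∃ Sp : SimpleGraph (ZMod p), IsCirculant Sp ∧
      ∃ (k : ℕ) (Θ : SimpleGraph (Fin k)), IsVertexTransitive Θ ∧
        Nonempty (Γ ≃g lexProd Θ Sp) := by
  classical
  obtain ⟨e₀, he₀, -⟩ := id hc₀
  have ho₀ : orderOf σ₀ = p := by rw [hc₀.orderOf, hs₀]
  set φ : ZMod p → V := phi σ₀ e₀ with hφdef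
  have φinj : Function.Injective φ := phi_inj hp ho₀ he₀
  have φmem : ∀ i, φ i ∈ σ₀.support := fun i => phi_mem_support he₀ i
  have φsurj : ∀ v ∈ σ₀.support, ∃ i, φ i = v := phi_surj hp ho₀ he₀ hc₀
  set Sp : SimpleGraph (ZMod p) :=
    { Adj := fun i j => Γ.Adj (φ i) (φ j)
      symm := ⟨fun i j (h : Γ.Adj (φ i) (φ j)) => h.symm⟩
      loopless := ⟨fun i (h : Γ.Adj (φ i) (φ i)) => Γ.irrefl h⟩ } with hSpdef
  have hcirc : IsCirculant Sp := fun c x y => (adj_phi_shift ho₀ ha₀ x y c).symm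
  set IsBlock : Finset V → Prop := fun B =>
    ∃ σ : Equiv.Perm V, IsAut Γ σ ∧ σ.IsCycle ∧ σ.support.card = p ∧ σ.support = B
    with hIBdef
  have hblock_eq : ∀ B B', IsBlock B → IsBlock B' → ∀ v, v ∈ B → v ∈ B' → B = B' := by
    rintro B B' ⟨σ, h1, h2, h3, h4⟩ ⟨σ', h1', h2', h3', h4'⟩ v hv hv'
    rcases supports_eq_or_disjoint hp hp5 h1 h2 h3 h1' h2' h3' hopen hclosed with h | h
    · rw [← h4, ← h4', h]
    · exact absurd (Finset.disjoint_left.mp h (by rw [h4]; exact hv) (by rw [h4']; exact hv'))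
        (fun x => x)
  have hgaut : ∀ g : Γ ≃g Γ, IsAut Γ g.toEquiv := fun g u v => g.map_adj_iff
  have hconj : ∀ g : Γ ≃g Γ, ∀ {σ : Equiv.Perm V}, IsAut Γ σ → σ.IsCycle →
      σ.support.card = p → IsBlock (σ.support.map g.toEquiv.toEmbedding) := by
    intro g σ h1 h2 h3
    refine ⟨g.toEquiv * σ * (g.toEquiv)⁻¹, ((hgaut g).mul h1).mul (hgaut g).inv, h2.conj,
      ?_, ?_⟩
    · rw [Equiv.Perm.support_conj, Finset.card_map, h3]
    · rw [Equiv.Perm.support_conj]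
  have hcoverg : ∀ v : V, ∃ g : Γ ≃g Γ, v ∈ σ₀.support.map g.toEquiv.toEmbedding := by
    intro v
    obtain ⟨g, hg⟩ := hvt e₀ v
    exact ⟨g, Finset.mem_map.mpr ⟨e₀, Equiv.Perm.mem_support.mpr he₀, hg⟩⟩
  set gv : V → (Γ ≃g Γ) := fun v => (hcoverg v).choose with hgvdef
  set blk : V → Finset V := fun v => σ₀.support.map (gv v).toEquiv.toEmbedding with hblkdef
  have hblkmem : ∀ v, v ∈ blk v := fun v => (hcoverg v).choose_spec
  have hblkblock : ∀ v, IsBlock (blk v) := fun v => hconj (gv v) ha₀ hc₀ hs₀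
  set ι := {B : Finset V // IsBlock B} with hιdef
  set c : V → ι := fun v => ⟨blk v, hblkblock v⟩ with hcdef
  have hcval : ∀ v, (c v).1 = blk v := fun v => rfl
  have hcsurj : ∀ i : ι, ∃ v, c v = i := by
    intro i
    obtain ⟨σ, h1, h2, h3, h4⟩ := i.2
    have hne : σ.support.Nonempty := by
      rw [← Finset.card_pos, h3]; omega
    obtain ⟨v, hv⟩ := hne
    have hvB : v ∈ i.1 := by rw [← h4]; exact hv
    exact ⟨v, Subtype.ext (hblock_eq _ _ (hblkblock v) i.2 v (hblkmem v) hvB)⟩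
  set rep : ι → V := fun i => (hcsurj i).choose with hrepdef
  have hrepc : ∀ i, c (rep i) = i := fun i => (hcsurj i).choose_spec
  have hrepblk : ∀ i, blk (rep i) = i.1 := fun i => congrArg Subtype.val (hrepc i)
  set f : ι → ZMod p → V := fun i j => (gv (rep i)) (φ j) with hfdef
  have hfmem : ∀ i j, f i j ∈ i.1 := by
    intro i j
    rw [← hrepblk i]
    show (gv (rep i)) (φ j) ∈ σ₀.support.map (gv (rep i)).toEquiv.toEmbedding
    exact Finset.mem_map.mpr ⟨φ j, φmem j, rfl⟩
  have hcf : ∀ i j, c (f i j) = i := by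
    intro i j
    exact Subtype.ext (hblock_eq _ _ (hblkblock (f i j)) i.2 (f i j) (hblkmem (f i j))
      (hfmem i j))
  have hfinj : ∀ i, Function.Injective (f i) := by
    intro i a b h
    exact φinj ((gv (rep i)).toEquiv.injective h)
  have hfc : ∀ v, ∃ j, f (c v) j = v := by
    intro v
    have h1 : blk (rep (c v)) = blk v := hrepblk (c v)
    have h2 : v ∈ blk (rep (c v)) := by rw [h1]; exact hblkmem v
    have h3 : v ∈ σ₀.support.map (gv (rep (c v))).toEquiv.toEmbedding := h2
    rw [Finset.mem_map] at h3
    obtain ⟨x, hx, hgx⟩ := h3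
    obtain ⟨j, rfl⟩ := φsurj x hx
    exact ⟨j, hgx⟩
  have hΔ : ∀ i a b, Γ.Adj (f i a) (f i b) ↔ Sp.Adj a b := by
    intro i a b
    exact (gv (rep i)).map_adj_iff
  have hcne : ∀ u v : V, c u ≠ c v → blk u ≠ blk v := fun u v h h2 => h (Subtype.ext h2)
  have huni0 : ∀ u v u', c u = c u' → c u ≠ c v → Γ.Adj u v → Γ.Adj u' v := by
    intro u v u' h1 h2 hadj
    obtain ⟨σ, hs1, hs2, hs3, hs4⟩ := hblkblock u
    have hvnot : v ∉ σ.support := by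
      intro hv
      have hvblk : v ∈ blk u := by rw [← hs4]; exact hv
      have : blk v = blk u :=
        hblock_eq _ _ (hblkblock v) (hblkblock u) v (hblkmem v) hvblk
      exact hcne u v h2 this.symm
    have humem : u ∈ σ.support := by rw [hs4]; exact hblkmem u
    have hu'mem : u' ∈ σ.support := by
      rw [hs4]
      have : blk u = blk u' := congrArg Subtype.val h1
      rw [this]
      exact hblkmem u'
    rcases uniform hs1 hs2 hvnot with hall | hnone
    · exact (hall u' hu'mem).symm
    · exact absurd hadj.symm (hnone u humem)
  have huni : ∀ u v u' v', c u = c u' → c v = c v' → c u ≠ c v → Γ.Adj u v → Γ.Adj u' v' := by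
    intro u v u' v' h1 h2 h3 hadj
    have step1 : Γ.Adj u' v := huni0 u v u' h1 h3 hadj
    have h3' : c v ≠ c u' := by rw [← h1]; exact fun h => h3 h.symm
    exact (huni0 v u' v' h2 h3' step1.symm).symm
  have hpart : ∀ g : Γ ≃g Γ, ∀ u v, c u = c v → c (g u) = c (g v) := by
    intro g u v h
    have himg : ∀ w : V, blk (g w) = (blk w).map g.toEquiv.toEmbedding := by
      intro w
      obtain ⟨σ, hs1, hs2, hs3, hs4⟩ := hblkblock w
      have hB : IsBlock ((blk w).map g.toEquiv.toEmbedding) := by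
        rw [← hs4]; exact hconj g hs1 hs2 hs3
      refine hblock_eq _ _ (hblkblock (g w)) hB (g w) (hblkmem (g w)) ?_
      exact Finset.mem_map.mpr ⟨w, hblkmem w, rfl⟩
    apply Subtype.ext
    show blk (g u) = blk (g v)
    have hbuv : blk u = blk v := congrArg Subtype.val h
    rw [himg, himg, hbuv]
  obtain ⟨k, Θ, hΘvt, hiso⟩ := decomp Γ hvt (0 : ZMod p) Sp c f hcf hfc hfinj hΔ huni hpart
  exact ⟨Sp, hcirc, k, Θ, hΘvt, hiso⟩


end St14

/-- No finite vertex-transitive graph has motion `p` for a prime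
`p ≥ 5`; more precisely, if the automorphism group of a finite vertex-transitive
graph `Γ` contains a `p`-cycle for a prime `p ≥ 5`, then `Γ ≅ Θ[Δ]` with `Θ`
vertex-transitive and `Δ` either `K_m` or `m K₁` for some `m ≥ 2`, or a circulant
graph on `p` vertices. -/
theorem statement_14 {V : Type} [Fintype V] [DecidableEq V] (Γ : SimpleGraph V)
    (hvt : IsVertexTransitive Γ) (p : ℕ) [NeZero p] (hp : p.Prime) (hp5 : 5 ≤ p) :
    motion Γ ≠ p ∧
    ((∃ e : Γ ≃g Γ, Equiv.Perm.IsCycle (e.toEquiv : Equiv.Perm V) ∧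
        (Equiv.Perm.support (e.toEquiv : Equiv.Perm V)).card = p) →
      ∃ (k : ℕ) (Θ : SimpleGraph (Fin k)), IsVertexTransitive Θ ∧
        ((∃ m : ℕ, 2 ≤ m ∧
            (Nonempty (Γ ≃g lexProd Θ (⊤ : SimpleGraph (Fin m))) ∨
             Nonempty (Γ ≃g lexProd Θ (⊥ : SimpleGraph (Fin m))))) ∨
         (∃ Sp : SimpleGraph (ZMod p), IsCirculant Sp ∧
            Nonempty (Γ ≃g lexProd Θ Sp)))) := by
  classical
  constructor
  · intro h
    exact St14.motion_sInf_ne Γ hp hp5 h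
  · rintro ⟨e, hcyc, hcard⟩
    have ha₀ : St14.IsAut Γ e.toEquiv := fun u v => e.map_adj_iff
    by_cases hop : ∃ u v : V, u ≠ v ∧ Γ.neighborSet u = Γ.neighborSet v
    · obtain ⟨u, v, hne, htwin⟩ := hop
      obtain ⟨m, hm2, k, Θ, hΘvt, hiso⟩ := St14.open_twin_decomp Γ hvt u v hne htwin
      exact ⟨k, Θ, hΘvt, Or.inl ⟨m, hm2, Or.inr hiso⟩⟩
    · by_cases hcl : ∃ u v : V, u ≠ v ∧
          insert u (Γ.neighborSet u) = insert v (Γ.neighborSet v)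
      · obtain ⟨u, v, hne, htwin⟩ := hcl
        obtain ⟨m, hm2, k, Θ, hΘvt, hiso⟩ := St14.closed_twin_decomp Γ hvt u v hne htwin
        exact ⟨k, Θ, hΘvt, Or.inl ⟨m, hm2, Or.inl hiso⟩⟩
      · push_neg at hop hcl
        have hopen : ∀ u v : V, Γ.neighborSet u = Γ.neighborSet v → u = v := by
          intro u v h
          by_contra hne
          exact hop u v hne h
        have hclosed : ∀ u v : V,
            insert u (Γ.neighborSet u) = insert v (Γ.neighborSet v) → u = v := by
          intro u v h
          by_contra hne
          exact hcl u v hne h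
        obtain ⟨Sp, hcirc, k, Θ, hΘvt, hiso⟩ :=
          St14.twinfree_decomp hvt hp hp5 ha₀ hcyc hcard hopen hclosed
        exact ⟨k, Θ, hΘvt, Or.inr ⟨Sp, hcirc, hiso⟩⟩
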